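/- For every positive integer n, the function x ↦ ψ^(2n-2)(e^x) is concave on ℝ, where ψ^(0) = ψ is the digamma function and ψ^(k) its k-th derivative. (In particular for n = 1 the function ψ(e^x) is concave.) -/

import Mathlib

noncomputable def digamma : ℝ → ℝ := deriv (fun x => Real.log (Real.Gamma x))

noncomputable def polygamma (i : ℕ) : ℝ → ℝ := iteratedDeriv i digamma


open Real Filter Set Topology Finset

lemma summable_aux {x : ℝ} (hx : 0 < x) {q : ℕ} (hq : 2 ≤ q) :
    Summable (fun k : ℕ => ((x + k) ^ q)⁻¹) := by
  have h2 : Summable (fun k : ℕ => ((x + k) ^ 2)⁻¹) := by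
    rw [← summable_nat_add_iff 1]
    have hg : Summable (fun k : ℕ => (((k : ℝ) + 1) ^ 2)⁻¹) := by
      have := (summable_nat_add_iff (f := fun n : ℕ => 1 / (n : ℝ) ^ 2) 1).2
        (Real.summable_one_div_nat_pow.2 one_lt_two)
      simpa [one_div] using this
    apply Summable.of_nonneg_of_le (fun k => by positivity) _ hg
    intro k
    apply inv_anti₀ (by positivity)
    push_cast
    nlinarith [Nat.cast_nonneg (α := ℝ) k]
  apply Summable.of_nonneg_of_le (fun k => by positivity) _ (h2.mul_left (x ^ (q - 2))⁻¹)
  intro k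
  rw [← mul_inv]
  apply inv_anti₀ (by positivity)
  calc x ^ (q-2) * (x+k)^2 ≤ (x+k) ^ (q-2) * (x+k)^2 := by
        have : (0:ℝ) ≤ (k:ℝ) := Nat.cast_nonneg k
        gcongr
        · linarith
    _ = (x+k) ^ q := by rw [← pow_add]; congr 1; omega

lemma hasDerivAt_tsum_ball {F F' : ℕ → ℝ → ℝ} {u : ℕ → ℝ} {s : Set ℝ} {x : ℝ}
    (hs : IsOpen s) (hx : x ∈ s) (hu : Summable u)
    (hF : ∀ k, ∀ y ∈ s, HasDerivAt (F k) (F' k y) y)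
    (hF' : ∀ k, ∀ y ∈ s, ‖F' k y‖ ≤ u k)
    (hsum : ∀ y ∈ s, Summable (fun k => F k y)) :
    HasDerivAt (fun y => ∑' k, F k y) (∑' k, F' k x) x := by
  apply hasDerivAt_of_tendstoUniformlyOn hs
    (tendstoUniformlyOn_tsum_nat hu (fun n y hy => hF' n y hy))
    (Eventually.of_forall fun N y hy => HasDerivAt.fun_sum fun k _ => hF k y hy)
    (fun y hy => (hsum y hy).hasSum.tendsto_sum_nat) hx

noncomputable def T (q : ℕ) (x : ℝ) : ℝ := ∑' k : ℕ, ((x + k) ^ q)⁻¹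

noncomputable def psi0 (x : ℝ) : ℝ :=
  -Real.eulerMascheroniConstant + ∑' k : ℕ, (((k : ℝ) + 1)⁻¹ - (x + k)⁻¹)

lemma summable_sq_shift : Summable (fun k : ℕ => (((k : ℝ) + 1) ^ 2)⁻¹) := by
  have := (summable_nat_add_iff (f := fun n : ℕ => 1 / (n : ℝ) ^ 2) 1).2
    (Real.summable_one_div_nat_pow.2 one_lt_two)
  simpa [one_div] using this

lemma g_bound {x : ℝ} (hx : 0 < x) {y : ℝ} (hy1 : x / 2 < y) (hy2 : y < x + 1) (k : ℕ) :
    ‖((k : ℝ) + 1)⁻¹ - (y + k)⁻¹‖ ≤ ((x + 2) / min (x/2) (1/2)) * (((k : ℝ) + 1) ^ 2)⁻¹ := by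
  have hk : (0:ℝ) ≤ k := Nat.cast_nonneg k
  have hc : 0 < min (x/2) (1/2) := by positivity
  have hyk : 0 < y + k := by linarith
  have heq : ((k : ℝ) + 1)⁻¹ - (y + k)⁻¹ = (y - 1) * (((k:ℝ) + 1) * (y + k))⁻¹ := by
    field_simp; ring
  have hlow : min (x/2) (1/2) * (((k:ℝ)+1)^2) ≤ ((k:ℝ)+1) * (y + k) := by
    rcases Nat.eq_zero_or_pos k with h0 | h1
    · subst h0
      simp only [Nat.cast_zero, add_zero]
      have := min_le_left (x/2) (1/2)
      nlinarith
    · have h1' : (1:ℝ) ≤ k := by exact_mod_cast h1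
      have := min_le_right (x/2) (1/2)
      nlinarith
  rw [heq, norm_mul, norm_inv, Real.norm_eq_abs, Real.norm_eq_abs,
    abs_of_pos (by positivity : (0:ℝ) < ((k:ℝ)+1) * (y+k))]
  have h1 : |y - 1| ≤ x + 2 := by
    rw [abs_le]; constructor <;> nlinarith
  have h2 : (((k:ℝ)+1) * (y + k))⁻¹ ≤ (min (x/2) (1/2) * (((k:ℝ)+1)^2))⁻¹ :=
    inv_anti₀ (by positivity) hlow
  calc |y - 1| * (((k:ℝ)+1) * (y + k))⁻¹
      ≤ (x + 2) * (min (x/2) (1/2) * (((k:ℝ)+1)^2))⁻¹ := by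
        apply mul_le_mul h1 h2 (by positivity) (by linarith)
    _ = ((x + 2) / min (x/2) (1/2)) * (((k : ℝ) + 1) ^ 2)⁻¹ := by
        rw [mul_inv, div_eq_mul_inv]; ring

lemma summable_g {y : ℝ} (hy : 0 < y) :
    Summable (fun k : ℕ => (((k : ℝ) + 1)⁻¹ - (y + k)⁻¹)) := by
  have h1 : y / 2 < y := by linarith
  have h2 : y < y + 1 := by linarith
  have hb := fun k => g_bound (x := y) hy h1 h2 k
  exact Summable.of_norm (Summable.of_nonneg_of_le (fun k => norm_nonneg _) hb
    (summable_sq_shift.mul_left _))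

lemma hasDerivAt_logGamma {x : ℝ} (hx : 0 < x) :
    HasDerivAt (fun y => Real.log (Real.Gamma y)) (psi0 x) x := by
  set s : Set ℝ := Ioo (x/2) (x+1) with hs_def
  have hso : IsOpen s := isOpen_Ioo
  have hxs : x ∈ s := ⟨by linarith, by linarith⟩
  have hmem : ∀ y ∈ s, 0 < y := fun y hy => lt_of_le_of_lt (by positivity) hy.1
  set f : ℕ → ℝ → ℝ := fun N y => y * Real.log N + Real.log (Nat.factorial N : ℝ) -
    ∑ k ∈ Finset.range (N+1), Real.log (y + k) with hf_def
  set f' : ℕ → ℝ → ℝ := fun N y =>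
    (Real.log N - ∑ k ∈ Finset.range (N+1), ((k:ℝ)+1)⁻¹)
      + ∑ k ∈ Finset.range (N+1), (((k:ℝ)+1)⁻¹ - (y+k)⁻¹) with hf'_def
  have hf : ∀ (N : ℕ), ∀ y ∈ s, HasDerivAt (f N) (f' N y) y := by
    intro N y hy
    have hy0 : 0 < y := hmem y hy
    have hsum : HasDerivAt (fun z : ℝ => ∑ k ∈ Finset.range (N+1), Real.log (z + k))
        (∑ k ∈ Finset.range (N+1), (y + (k:ℝ))⁻¹) y := by
      apply HasDerivAt.fun_sum
      intro k _
      have hk : (0:ℝ) ≤ k := Nat.cast_nonneg k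
      have hne : y + (k:ℝ) ≠ 0 := by positivity
      simpa [Function.comp_def] using (Real.hasDerivAt_log hne).comp y ((hasDerivAt_id y).add_const (k:ℝ))
    have hd : HasDerivAt (f N) (Real.log N - ∑ k ∈ Finset.range (N+1), (y + (k:ℝ))⁻¹) y := by
      exact ((hasDerivAt_mul_const (Real.log N)).add_const (Real.log (Nat.factorial N : ℝ))).sub hsum
    have heq : Real.log N - ∑ k ∈ Finset.range (N+1), (y+(k:ℝ))⁻¹ = f' N y := by
      simp only [hf'_def, Finset.sum_sub_distrib]
      ring
    exact heq ▸ hd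
  have hfg : ∀ y ∈ s, Tendsto (fun N => f N y) atTop (𝓝 (Real.log (Real.Gamma y))) := by
    intro y hy
    have hy0 : 0 < y := hmem y hy
    have hG : Tendsto (fun N => Real.log (Real.GammaSeq y N)) atTop
        (𝓝 (Real.log (Real.Gamma y))) :=
      ((Real.continuousAt_log (Real.Gamma_pos_of_pos hy0).ne').tendsto).comp
        (Real.GammaSeq_tendsto_Gamma y)
    apply hG.congr'
    filter_upwards [eventually_ge_atTop 1] with N hN
    have hN0 : (0:ℝ) < N := by exact_mod_cast hN
    have hprod : ∀ j ∈ Finset.range (N+1), y + (j:ℝ) ≠ 0 := by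
      intro j _
      have : (0:ℝ) ≤ j := Nat.cast_nonneg j
      positivity
    rw [Real.GammaSeq, Real.log_div (by positivity) (Finset.prod_ne_zero_iff.2 hprod),
      Real.log_mul (by positivity) (by positivity), Real.log_rpow hN0,
      Real.log_prod hprod]
  have hharm : ∀ N : ℕ, ((harmonic (N+1) : ℚ) : ℝ) = ∑ k ∈ Finset.range (N+1), ((k:ℝ)+1)⁻¹ := by
    intro N
    rw [harmonic]
    push_cast
    ring
  have hh : Tendsto (fun N : ℕ => ((harmonic (N+1) : ℚ) : ℝ) - Real.log ((N:ℝ)+1)) atTop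
      (𝓝 Real.eulerMascheroniConstant) := by
    have := Real.tendsto_harmonic_sub_log.comp (tendsto_add_atTop_nat 1)
    apply this.congr
    intro N
    simp [Function.comp]
  have hl : Tendsto (fun N : ℕ => Real.log N - Real.log ((N:ℝ)+1)) atTop (𝓝 0) := by
    have h1 : Tendsto (fun N : ℕ => (N:ℝ)/((N:ℝ)+1)) atTop (𝓝 1) := by
      have := tendsto_natCast_div_add_atTop (𝕜 := ℝ) 1
      exact this
    have h2 : Tendsto (fun N : ℕ => Real.log ((N:ℝ)/((N:ℝ)+1))) atTop (𝓝 0) := by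
      have := h1.log one_ne_zero
      simpa using this
    apply h2.congr'
    filter_upwards [eventually_ge_atTop 1] with N hN
    have hN0 : (0:ℝ) < N := by exact_mod_cast hN
    rw [Real.log_div hN0.ne' (by positivity)]
  have hc : Tendsto (fun N : ℕ => Real.log N - ∑ k ∈ Finset.range (N+1), ((k:ℝ)+1)⁻¹) atTop
      (𝓝 (-Real.eulerMascheroniConstant)) := by
    have := (hh.neg).add hl
    try simp only [neg_add_rev] at this
    apply this.congr' ?_ |>.mono_right ?_
    · filter_upwards with N
      rw [← hharm N]
      ring
    · apply le_of_eq
      congr 1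
      ring
  have hU1 : TendstoUniformlyOn
      (fun (N : ℕ) (_ : ℝ) => Real.log N - ∑ k ∈ Finset.range (N+1), ((k:ℝ)+1)⁻¹)
      (fun _ => -Real.eulerMascheroniConstant) atTop s := by
    rw [Metric.tendstoUniformlyOn_iff]
    intro ε hε
    filter_upwards [hc (Metric.ball_mem_nhds _ hε)] with N hN y _
    rw [dist_comm]
    exact hN
  have hU2 : TendstoUniformlyOn (fun N y => ∑ k ∈ Finset.range (N+1), (((k:ℝ)+1)⁻¹ - (y+(k:ℝ))⁻¹))
      (fun y => ∑' k : ℕ, (((k:ℝ)+1)⁻¹ - (y+(k:ℝ))⁻¹)) atTop s := by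
    have h0 := tendstoUniformlyOn_tsum_nat (f := fun (k : ℕ) (y : ℝ) => (((k:ℝ)+1)⁻¹ - (y+(k:ℝ))⁻¹))
      (u := fun k => ((x + 2) / min (x/2) (1/2)) * (((k : ℝ) + 1) ^ 2)⁻¹) (s := s)
      (summable_sq_shift.mul_left _) (fun k y (hy : y ∈ s) => g_bound hx hy.1 hy.2 k)
    intro u hu
    exact (tendsto_add_atTop_nat 1).eventually (h0 u hu)
  have hftu : TendstoUniformlyOn f' psi0 atTop s := by
    have := hU1.add hU2
    apply this.congr_right
    intro y _
    rfl
  exact hasDerivAt_of_tendstoUniformlyOn hso hftu (Eventually.of_forall hf) hfg hxs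

lemma digamma_eq {x : ℝ} (hx : 0 < x) : digamma x = psi0 x :=
  (hasDerivAt_logGamma hx).deriv

lemma hasDerivAt_psi0 {x : ℝ} (hx : 0 < x) : HasDerivAt psi0 (T 2 x) x := by
  have hso : IsOpen (Ioo (x/2) (x+1)) := isOpen_Ioo
  have hxs : x ∈ Ioo (x/2) (x+1) := ⟨by linarith, by linarith⟩
  have hmem : ∀ y ∈ Ioo (x/2) (x+1), 0 < y := fun y hy => lt_of_le_of_lt (by positivity) hy.1
  have key : HasDerivAt (fun y : ℝ => ∑' k : ℕ, (((k : ℝ) + 1)⁻¹ - (y + (k:ℝ))⁻¹))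
      (∑' k : ℕ, ((x + (k:ℝ)) ^ 2)⁻¹) x := by
    apply hasDerivAt_tsum_ball (u := fun k : ℕ => ((x/2 + (k:ℝ)) ^ 2)⁻¹) hso hxs
      (summable_aux (by positivity) le_rfl)
    · intro k y hy
      have hy0 : 0 < y := hmem y hy
      have hk : (0:ℝ) ≤ k := Nat.cast_nonneg k
      have hne : y + (k:ℝ) ≠ 0 := by positivity
      have h1 : HasDerivAt (fun z : ℝ => (z + (k:ℝ))⁻¹) (-(((y+(k:ℝ))^2)⁻¹)) y := by
        have := (hasDerivAt_inv hne).comp y ((hasDerivAt_id y).add_const (k:ℝ))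
        simpa [Function.comp_def] using this
      have := h1.neg.const_add ((k:ℝ)+1)⁻¹
      simpa [sub_eq_add_neg] using this
    · intro k y hy
      have hy0 : 0 < y := hmem y hy
      have hk : (0:ℝ) ≤ k := Nat.cast_nonneg k
      have h2 : (0:ℝ) < x/2 + k := by positivity
      rw [Real.norm_eq_abs, abs_of_pos (by positivity : (0:ℝ) < ((y+(k:ℝ))^2)⁻¹)]
      apply inv_anti₀ (by positivity)
      have := hy.1
      nlinarith
    · intro y hy
      exact summable_g (hmem y hy)
  have : HasDerivAt (fun y : ℝ => -Real.eulerMascheroniConstant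
      + ∑' k : ℕ, (((k : ℝ) + 1)⁻¹ - (y + k)⁻¹)) (∑' k : ℕ, ((x + (k:ℝ)) ^ 2)⁻¹) x :=
    key.const_add _
  exact this

lemma hasDerivAt_T (m : ℕ) {x : ℝ} (hx : 0 < x) :
    HasDerivAt (T (m+2)) (-((m:ℝ)+2) * T (m+3) x) x := by
  have hso : IsOpen (Ioo (x/2) (x+1)) := isOpen_Ioo
  have hxs : x ∈ Ioo (x/2) (x+1) := ⟨by linarith, by linarith⟩
  have hmem : ∀ y ∈ Ioo (x/2) (x+1), 0 < y := fun y hy => lt_of_le_of_lt (by positivity) hy.1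
  have key : HasDerivAt (fun y => ∑' k : ℕ, ((y + (k:ℝ)) ^ (m+2))⁻¹)
      (∑' k : ℕ, (-((m:ℝ)+2) * ((x + (k:ℝ)) ^ (m+3))⁻¹)) x := by
    apply hasDerivAt_tsum_ball (u := fun k : ℕ => ((m:ℝ)+2) * ((x/2 + (k:ℝ)) ^ (m+3))⁻¹) hso hxs
      ((summable_aux (by positivity) (by omega)).mul_left _)
    · intro k y hy
      have hy0 : 0 < y := hmem y hy
      have hk : (0:ℝ) ≤ k := Nat.cast_nonneg k
      have hyk : 0 < y + (k:ℝ) := by positivity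
      have hp : HasDerivAt (fun z : ℝ => (z + (k:ℝ)) ^ (m+2))
          (((m:ℝ)+2) * (y + (k:ℝ)) ^ (m+1)) y := by
        have := (hasDerivAt_pow (m+2) (y + (k:ℝ))).comp y ((hasDerivAt_id y).add_const (k:ℝ))
        simpa [Nat.add_sub_cancel, Function.comp_def] using this
        -- deriv: ↑(m+2) * (y+k)^(m+2-1)
      have hinv := hp.inv (by positivity)
      convert hinv using 1 <;> try with_reducible_and_instances rfl
      rw [div_eq_mul_inv]
      rw [show ((y + (k:ℝ)) ^ (m+2)) ^ 2 = (y + (k:ℝ)) ^ (m+3) * (y + (k:ℝ)) ^ (m+1) by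
        rw [← pow_add, ← pow_mul]; ring_nf]
      push_cast
      rw [mul_inv]
      field_simp
    · intro k y hy
      have hy0 : 0 < y := hmem y hy
      have hk : (0:ℝ) ≤ k := Nat.cast_nonneg k
      have h2 : (0:ℝ) < x/2 + k := by positivity
      rw [norm_mul, Real.norm_eq_abs, Real.norm_eq_abs, abs_neg,
        abs_of_nonneg (by positivity : (0:ℝ) ≤ (m:ℝ)+2),
        abs_of_pos (by positivity : (0:ℝ) < ((y+(k:ℝ))^(m+3))⁻¹)]
      apply mul_le_mul_of_nonneg_left _ (by positivity)
      apply inv_anti₀ (by positivity)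
      apply pow_le_pow_left₀ h2.le
      linarith [hy.1]
    · intro y hy
      exact summable_aux (hmem y hy) (by omega)
  have heq : (∑' k : ℕ, (-((m:ℝ)+2) * ((x + (k:ℝ)) ^ (m+3))⁻¹))
      = -((m:ℝ)+2) * T (m+3) x := by
    rw [T, tsum_mul_left]
  rw [heq] at key
  exact key

noncomputable def psi : ℕ → ℝ → ℝ
  | 0 => psi0
  | (j+1) => fun x => (-1:ℝ)^j * (Nat.factorial (j+1) : ℝ) * T (j+2) x

lemma hasDerivAt_psi (j : ℕ) {x : ℝ} (hx : 0 < x) :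
    HasDerivAt (psi j) (psi (j+1) x) x := by
  cases j with
  | zero =>
      have := hasDerivAt_psi0 hx
      have h : psi 1 x = T 2 x := by simp [psi]
      rw [show psi 0 = psi0 from rfl, h]
      exact this
  | succ m =>
      have h1 := (hasDerivAt_T m hx).const_mul ((-1:ℝ)^m * (Nat.factorial (m+1) : ℝ))
      have h2 : psi (m+1) = fun y => (-1:ℝ)^m * (Nat.factorial (m+1) : ℝ) * T (m+2) y := rfl
      rw [h2]
      convert h1 using 1 <;> try rfl
      show (-1:ℝ)^(m+1) * (Nat.factorial (m+2) : ℝ) * T (m+3) x = _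
      rw [Nat.factorial_succ (m+1)]
      push_cast
      ring
  
lemma iteratedDeriv_digamma (j : ℕ) : ∀ x : ℝ, 0 < x → iteratedDeriv j digamma x = psi j x := by
  induction j with
  | zero => intro x hx; simpa [psi] using digamma_eq hx
  | succ j ih =>
      intro x hx
      rw [iteratedDeriv_succ]
      have hev : psi j =ᶠ[nhds x] iteratedDeriv j digamma := by
        filter_upwards [isOpen_Ioi.mem_nhds (show x ∈ Set.Ioi 0 from hx)] with y hy
        exact (ih y hy).symm
      exact ((hasDerivAt_psi j hx).congr_of_eventuallyEq hev.symm).deriv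

lemma pow_lb (n : ℕ) {a b : ℝ} (ha : 0 ≤ a) (hab : a ≤ b) :
    ((n:ℝ)+1) * a^n * (b-a) ≤ b^(n+1) - a^(n+1) := by
  induction n with
  | zero => simp
  | succ n ih =>
      have hb : 0 ≤ b := le_trans ha hab
      have h1 : ((n:ℝ)+1) * a^n * (b-a) * b ≤ (b^(n+1) - a^(n+1)) * b :=
        mul_le_mul_of_nonneg_right ih hb
      have h2 : a^n * a ≤ a^n * b := by
        apply mul_le_mul_of_nonneg_left hab (pow_nonneg ha n)
      have h3 : 0 ≤ b - a := sub_nonneg.2 hab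
      have h4 : ((n:ℝ)+1) * (a^n * a) * (b-a) ≤ ((n:ℝ)+1) * (a^n * b) * (b-a) := by
        apply mul_le_mul_of_nonneg_right _ h3
        apply mul_le_mul_of_nonneg_left h2
        positivity
      push_cast
      calc ((n:ℝ)+1+1) * a^(n+1) * (b-a)
          = ((n:ℝ)+1) * (a^n * a) * (b-a) + a^(n+1) * (b-a) := by rw [pow_succ]; ring
        _ ≤ ((n:ℝ)+1) * (a^n * b) * (b-a) + a^(n+1) * (b-a) := by linarith
        _ = ((n:ℝ)+1) * a^n * (b-a) * b + a^(n+1) * (b-a) := by ring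
        _ ≤ (b^(n+1) - a^(n+1)) * b + a^(n+1) * (b-a) := by linarith
        _ = b^(n+2) - a^(n+2) := by rw [pow_succ b (n+1), pow_succ a (n+1)]; ring

lemma rearr {a b : ℝ} (ha : 0 ≤ a) (hab : a ≤ b) (s t : ℕ) :
    a^(t+1) * b^(s+1) + a^(s+1) * b^(t+1) ≤ a^(s+t+2) + b^(s+t+2) := by
  have h1 : a^(s+1) ≤ b^(s+1) := pow_le_pow_left₀ ha hab _
  have h2 : a^(t+1) ≤ b^(t+1) := pow_le_pow_left₀ ha hab _
  have key : 0 ≤ (b^(s+1) - a^(s+1)) * (b^(t+1) - a^(t+1)) :=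
    mul_nonneg (sub_nonneg.2 h1) (sub_nonneg.2 h2)
  have e1 : a^(s+t+2) = a^(s+1) * a^(t+1) := by rw [← pow_add]; ring_nf
  have e2 : b^(s+t+2) = b^(s+1) * b^(t+1) := by rw [← pow_add]; ring_nf
  nlinarith [key]

lemma trap {a : ℝ} (ha : 0 < a) {M : ℕ} (hM : 1 ≤ M) :
    2*a*(a+1)*((a+1)^M - a^M) ≤ (M:ℝ)*(a^(M+1) + (a+1)^(M+1)) := by
  set b := a + 1 with hb
  have hab : a ≤ b := by rw [hb]; linarith
  have hgeom : b^M - a^M = ∑ i ∈ Finset.range M, b^i * a^(M-1-i) := by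
    have h := geom_sum₂_mul (R := ℝ) b a M
    rw [show b - a = 1 by simp [hb]] at h
    rw [← h, mul_one]
  set f : ℕ → ℝ := fun i => 2*a*b*(b^i * a^(M-1-i)) with hf
  have hsum : 2*a*b*(b^M - a^M) = ∑ i ∈ Finset.range M, f i := by
    rw [hgeom, Finset.mul_sum]
  have hrefl : ∑ i ∈ Finset.range M, f (M-1-i) = ∑ i ∈ Finset.range M, f i :=
    Finset.sum_range_reflect f M
  have hterm : ∀ i ∈ Finset.range M, f i + f (M-1-i) ≤ 2*(a^(M+1) + b^(M+1)) := by
    intro i hi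
    have hiM : i < M := Finset.mem_range.1 hi
    have e1 : M - 1 - i + 1 = M - i := by omega
    have e2 : M - 1 - (M-1-i) = i := by omega
    have e3 : i + (M-1-i) + 2 = M + 1 := by omega
    have := rearr ha.le hab i (M-1-i)
    rw [e3] at this
    have ef1 : f i = 2 * (a^((M-1-i)+1) * b^(i+1)) := by
      rw [hf]; simp only; rw [pow_succ a (M-1-i), pow_succ b i]; ring
    have ef2 : f (M-1-i) = 2 * (a^(i+1) * b^((M-1-i)+1)) := by
      rw [hf]; simp only; rw [e2, pow_succ a i, pow_succ b (M-1-i)]; ring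
    rw [ef1, ef2]
    linarith
  have hsum2 : (∑ i ∈ Finset.range M, f i) * 2 ≤ (M:ℝ) * (2*(a^(M+1) + b^(M+1))) := by
    calc (∑ i ∈ Finset.range M, f i) * 2
        = ∑ i ∈ Finset.range M, (f i + f (M-1-i)) := by
          rw [Finset.sum_add_distrib, hrefl]; ring
      _ ≤ ∑ _i ∈ Finset.range M, 2*(a^(M+1) + b^(M+1)) := Finset.sum_le_sum hterm
      _ = (M:ℝ) * (2*(a^(M+1) + b^(M+1))) := by
          rw [Finset.sum_const, Finset.card_range, nsmul_eq_mul]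
  rw [hsum]
  linarith

lemma step_ineq {a : ℝ} (ha : 0 < a) (m : ℕ) :
    ((m:ℝ)+1) * ((a+1)^(m+2))⁻¹ ≤ (a^(m+1))⁻¹ - ((a+1)^(m+1))⁻¹ := by
  set b := a + 1 with hb
  have hb0 : 0 < b := by rw [hb]; linarith
  have hab : a ≤ b := by rw [hb]; linarith
  have h := pow_lb m ha.le hab
  rw [show b - a = 1 by rw [hb]; ring, mul_one] at h
  rw [inv_sub_inv (by positivity) (by positivity)]
  rw [show ((m:ℝ)+1) * (b^(m+2))⁻¹ = ((m:ℝ)+1) / b^(m+2) by rw [div_eq_mul_inv]]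
  rw [div_le_div_iff₀ (by positivity) (by positivity)]
  have hba : b^(m+1) - a^(m+1) ≥ 0 := by
    have := pow_le_pow_left₀ ha.le hab (m+1); linarith
  calc ((m:ℝ)+1) * (a^(m+1) * b^(m+1)) = (((m:ℝ)+1) * a^m) * (a * b^(m+1)) := by
        rw [pow_succ a m]; ring
    _ ≤ (b^(m+1) - a^(m+1)) * (a * b^(m+1)) := by
        apply mul_le_mul_of_nonneg_right h (by positivity)
    _ ≤ (b^(m+1) - a^(m+1)) * (b * b^(m+1)) := by
        apply mul_le_mul_of_nonneg_left _ hba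
        apply mul_le_mul_of_nonneg_right hab (by positivity)
    _ = (b^(m+1) - a^(m+1)) * b^(m+2) := by rw [pow_succ b (m+1)]; ring

lemma trap_ineq {a : ℝ} (ha : 0 < a) (m : ℕ) :
    2 * (((m:ℝ)+2)⁻¹ * ((a^(m+2))⁻¹ - ((a+1)^(m+2))⁻¹)) ≤ (a^(m+3))⁻¹ + ((a+1)^(m+3))⁻¹ := by
  set b := a + 1 with hb
  have hb0 : 0 < b := by rw [hb]; linarith
  have key : 2*a*b*(b^(m+2) - a^(m+2)) ≤ ((m:ℝ)+2)*(a^(m+3) + b^(m+3)) := by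
    have h' := trap ha (M := m+2) (by omega)
    rw [← hb] at h'
    push_cast at h'
    convert h' using 2 <;> ring
  have h2 : 2 * ((a^(m+2))⁻¹ - (b^(m+2))⁻¹) ≤ ((m:ℝ)+2) * ((a^(m+3))⁻¹ + (b^(m+3))⁻¹) := by
    have e1 : (a^(m+2))⁻¹ - (b^(m+2))⁻¹ = (b^(m+2) - a^(m+2)) / (a^(m+2) * b^(m+2)) := by
      rw [inv_sub_inv (by positivity) (by positivity)]
    have e2 : (a^(m+3))⁻¹ + (b^(m+3))⁻¹ = (b^(m+3) + a^(m+3)) / (a^(m+3) * b^(m+3)) := by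
      field_simp
    rw [e1, e2, mul_div_assoc', mul_div_assoc', div_le_div_iff₀ (by positivity) (by positivity)]
    calc 2*(b^(m+2)-a^(m+2)) * (a^(m+3)*b^(m+3))
        = (2*a*b*(b^(m+2)-a^(m+2))) * (a^(m+2)*b^(m+2)) := by
          rw [pow_succ a (m+2), pow_succ b (m+2)]; ring
      _ ≤ (((m:ℝ)+2)*(a^(m+3)+b^(m+3))) * (a^(m+2)*b^(m+2)) :=
          mul_le_mul_of_nonneg_right key (by positivity)
      _ = ((m:ℝ)+2)*(b^(m+3)+a^(m+3)) * (a^(m+2)*b^(m+2)) := by ring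
  have final : 2*(((m:ℝ)+2)⁻¹ * ((a^(m+2))⁻¹ - (b^(m+2))⁻¹))
      = ((m:ℝ)+2)⁻¹ * (2 * ((a^(m+2))⁻¹ - (b^(m+2))⁻¹)) := by ring
  rw [final]
  calc ((m:ℝ)+2)⁻¹ * (2 * ((a^(m+2))⁻¹ - (b^(m+2))⁻¹))
      ≤ ((m:ℝ)+2)⁻¹ * (((m:ℝ)+2) * ((a^(m+3))⁻¹ + (b^(m+3))⁻¹)) :=
        mul_le_mul_of_nonneg_left h2 (by positivity)
    _ = (a^(m+3))⁻¹ + (b^(m+3))⁻¹ := by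
        rw [← mul_assoc, inv_mul_cancel₀ (by positivity), one_mul]

lemma T_upper {x : ℝ} (hx : 0 < x) (m : ℕ) :
    T (m+2) x ≤ (x^(m+2))⁻¹ + ((m:ℝ)+1)⁻¹ * (x^(m+1))⁻¹ := by
  apply tsum_le_of_sum_range_le (fun k => by positivity)
  intro N
  match N with
  | 0 => simp; positivity
  | (K+1) =>
    rw [Finset.sum_range_succ']
    have h0 : ((x + ((0:ℕ):ℝ)) ^ (m+2))⁻¹ = (x^(m+2))⁻¹ := by norm_num
    rw [h0]
    have hstep : ∀ k : ℕ, ((x + ((k+1:ℕ):ℝ)) ^ (m+2))⁻¹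
        ≤ ((m:ℝ)+1)⁻¹ * (((x+(k:ℝ))^(m+1))⁻¹ - ((x+((k+1:ℕ):ℝ))^(m+1))⁻¹) := by
      intro k
      have hk : (0:ℝ) ≤ k := Nat.cast_nonneg k
      have ha : 0 < x + (k:ℝ) := by positivity
      have := step_ineq ha m
      have hcast : x + ((k+1:ℕ):ℝ) = (x + (k:ℝ)) + 1 := by push_cast; ring
      rw [hcast]
      calc ((x + (k:ℝ) + 1) ^ (m+2))⁻¹
          = ((m:ℝ)+1)⁻¹ * (((m:ℝ)+1) * ((x + (k:ℝ) + 1) ^ (m+2))⁻¹) := by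
            field_simp
        _ ≤ ((m:ℝ)+1)⁻¹ * (((x+(k:ℝ))^(m+1))⁻¹ - ((x+(k:ℝ)+1)^(m+1))⁻¹) := by
            apply mul_le_mul_of_nonneg_left this (by positivity)
    calc (∑ k ∈ Finset.range K, ((x + ((k+1:ℕ):ℝ)) ^ (m+2))⁻¹) + (x^(m+2))⁻¹
        ≤ (∑ k ∈ Finset.range K, ((m:ℝ)+1)⁻¹ * (((x+(k:ℝ))^(m+1))⁻¹ - ((x+((k+1:ℕ):ℝ))^(m+1))⁻¹))
          + (x^(m+2))⁻¹ := by
          gcongr with k hk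
          exact hstep k
      _ = ((m:ℝ)+1)⁻¹ * (((x+((0:ℕ):ℝ))^(m+1))⁻¹ - ((x+((K:ℕ):ℝ))^(m+1))⁻¹) + (x^(m+2))⁻¹ := by
          rw [← Finset.mul_sum]
          congr 2
          exact Finset.sum_range_sub' (fun k => ((x+((k:ℕ):ℝ))^(m+1))⁻¹) K
      _ ≤ (x^(m+2))⁻¹ + ((m:ℝ)+1)⁻¹ * (x^(m+1))⁻¹ := by
          have h1 : (0:ℝ) ≤ ((x+((K:ℕ):ℝ))^(m+1))⁻¹ := by positivity
          have h2 : ((x+((0:ℕ):ℝ))^(m+1))⁻¹ = (x^(m+1))⁻¹ := by norm_num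
          rw [h2]
          have h3 : (0:ℝ) ≤ ((m:ℝ)+1)⁻¹ := by positivity
          nlinarith

lemma T_lower {x : ℝ} (hx : 0 < x) (m : ℕ) :
    (1/2) * (x^(m+3))⁻¹ + ((m:ℝ)+2)⁻¹ * (x^(m+2))⁻¹ ≤ T (m+3) x := by
  set f : ℕ → ℝ := fun k => ((x + (k:ℝ))^(m+3))⁻¹ with hf
  set h : ℕ → ℝ := fun k => ((x + (k:ℝ))^(m+2))⁻¹ with hh
  have hfpos : ∀ k, 0 ≤ f k := by
    intro k
    have hk : (0:ℝ) ≤ k := Nat.cast_nonneg k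
    positivity
  have hsummable : Summable f := summable_aux hx (by omega)
  have hpartial : ∀ N : ℕ, (1/2) * f 0 + ((m:ℝ)+2)⁻¹ * (h 0 - h N)
      ≤ ∑ k ∈ Finset.range (N+1), f k := by
    intro N
    have hterm : ∀ k : ℕ, 2 * (((m:ℝ)+2)⁻¹ * (h k - h (k+1))) ≤ f k + f (k+1) := by
      intro k
      have hk : (0:ℝ) ≤ k := Nat.cast_nonneg k
      have ha : 0 < x + (k:ℝ) := by positivity
      have := trap_ineq ha m
      have hcast : x + ((k+1:ℕ):ℝ) = (x + (k:ℝ)) + 1 := by push_cast; ring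
      rw [hf, hh]
      simp only
      rw [hcast]
      exact this
    have hA : ∑ k ∈ Finset.range N, (f k + f (k+1))
        = ∑ k ∈ Finset.range N, f k + (∑ k ∈ Finset.range (N+1), f k - f 0) := by
      rw [Finset.sum_add_distrib, Finset.sum_range_succ' f N]
      ring
    have hB : ∑ k ∈ Finset.range N, f k + f N = ∑ k ∈ Finset.range (N+1), f k :=
      (Finset.sum_range_succ f N).symm
    have hC : ∑ k ∈ Finset.range N, (2 * (((m:ℝ)+2)⁻¹ * (h k - h (k+1))))
        ≤ ∑ k ∈ Finset.range N, (f k + f (k+1)) := Finset.sum_le_sum (fun k _ => hterm k)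
    have hD : ∑ k ∈ Finset.range N, (2 * (((m:ℝ)+2)⁻¹ * (h k - h (k+1))))
        = 2 * ((m:ℝ)+2)⁻¹ * (h 0 - h N) := by
      rw [← Finset.mul_sum, ← Finset.mul_sum, Finset.sum_range_sub' h N]
      ring
    have hfN : 0 ≤ f N := hfpos N
    rw [hD] at hC
    linarith
  have hpartial2 : ∀ N : ℕ, (1/2) * f 0 + ((m:ℝ)+2)⁻¹ * (h 0 - h N) ≤ T (m+3) x := by
    intro N
    exact le_trans (hpartial N) (Summable.sum_le_tsum (Finset.range (N+1)) (fun k _ => hfpos k) hsummable)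
  have hlim : Tendsto (fun N : ℕ => (1/2) * f 0 + ((m:ℝ)+2)⁻¹ * (h 0 - h N)) atTop
      (𝓝 ((1/2) * f 0 + ((m:ℝ)+2)⁻¹ * (h 0 - 0))) := by
    apply Tendsto.const_add
    apply Tendsto.const_mul
    apply Tendsto.const_sub
    have h1 : Tendsto (fun N : ℕ => x + (N:ℝ)) atTop atTop :=
      tendsto_atTop_add_const_left _ x tendsto_natCast_atTop_atTop
    have h2 : Tendsto (fun N : ℕ => (x + (N:ℝ))^(m+2)) atTop atTop :=
      (tendsto_pow_atTop (by omega)).comp h1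
    exact h2.inv_tendsto_atTop
  have := le_of_tendsto hlim (Eventually.of_forall hpartial2)
  have hf0 : f 0 = (x^(m+3))⁻¹ := by rw [hf]; norm_num
  have hh0 : h 0 = (x^(m+2))⁻¹ := by rw [hh]; norm_num
  rw [hf0, hh0] at this
  simpa using this

lemma main_ineq (m : ℕ) (hm : Even m) {y : ℝ} (hy : 0 < y) :
    psi (m+1) y + y * psi (m+2) y ≤ 0 := by
  have hpow1 : ((-1:ℝ))^m = 1 := hm.neg_one_pow
  have hpow2 : ((-1:ℝ))^(m+1) = -1 := by rw [pow_succ, hpow1]; ring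
  have e1 : psi (m+1) y = (Nat.factorial (m+1) : ℝ) * T (m+2) y := by
    show (-1:ℝ)^m * (Nat.factorial (m+1) : ℝ) * T (m+2) y = _
    rw [hpow1]; ring
  have e2 : psi (m+2) y = -((Nat.factorial (m+2) : ℝ) * T (m+3) y) := by
    show (-1:ℝ)^(m+1) * (Nat.factorial (m+2) : ℝ) * T (m+3) y = _
    rw [hpow2]; ring
  rw [e1, e2]
  set A := (y^(m+1))⁻¹ with hA
  set B := (y^(m+2))⁻¹ with hB
  set C := (y^(m+3))⁻¹ with hC
  have hApos : 0 ≤ A := by positivity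
  have hBpos : 0 ≤ B := by positivity
  have hyC : y * C = B := by
    rw [hC, hB, pow_succ y (m+2)]
    field_simp
  have hyB : y * B = A := by
    rw [hA, hB, pow_succ y (m+1)]
    field_simp
  set F1 := (Nat.factorial (m+1) : ℝ) with hF1
  set F2 := (Nat.factorial (m+2) : ℝ) with hF2
  have hF1pos : 0 < F1 := by rw [hF1]; exact_mod_cast Nat.factorial_pos _
  have hF2eq : F2 = ((m:ℝ)+2) * F1 := by
    rw [hF1, hF2, Nat.factorial_succ (m+1)]
    push_cast
    ring
  have hfacA : F1 * ((m:ℝ)+1)⁻¹ = (Nat.factorial m : ℝ) := by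
    rw [hF1, Nat.factorial_succ m]
    push_cast
    field_simp
  have hmfacle : (Nat.factorial m : ℝ) ≤ F1 := by
    rw [hF1]
    exact_mod_cast Nat.factorial_le (Nat.le_succ m)
  have hu := T_upper hy m
  have hl := T_lower hy m
  have h1 : F1 * T (m+2) y ≤ F1 * B + (Nat.factorial m : ℝ) * A := by
    calc F1 * T (m+2) y ≤ F1 * (B + ((m:ℝ)+1)⁻¹ * A) :=
          mul_le_mul_of_nonneg_left hu hF1pos.le
      _ = F1 * B + (F1 * ((m:ℝ)+1)⁻¹) * A := by ring
      _ = F1 * B + (Nat.factorial m : ℝ) * A := by rw [hfacA]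
  have h2 : F2 * B / 2 + F1 * A ≤ y * (F2 * T (m+3) y) := by
    calc y * (F2 * T (m+3) y) ≥ y * (F2 * ((1/2) * C + ((m:ℝ)+2)⁻¹ * B)) := by
          apply mul_le_mul_of_nonneg_left _ hy.le
          apply mul_le_mul_of_nonneg_left hl (by rw [hF2]; positivity)
      _ = F2 * (y * C) / 2 + (F2 * ((m:ℝ)+2)⁻¹) * (y * B) := by ring
      _ = F2 * B / 2 + F1 * A := by
          rw [hyC, hyB]
          have hme : F2 * ((m:ℝ)+2)⁻¹ = F1 := by
            rw [hF2eq]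
            field_simp
          rw [hme]
  have h3 : F1 * B + (Nat.factorial m : ℝ) * A ≤ F2 * B / 2 + F1 * A := by
    have hB2 : F1 * B ≤ F2 * B / 2 := by
      rw [hF2eq]
      have hm0 : (0:ℝ) ≤ (m:ℝ) := Nat.cast_nonneg m
      have := mul_nonneg (mul_nonneg hm0 hF1pos.le) hBpos
      nlinarith
    have hA2 : (Nat.factorial m : ℝ) * A ≤ F1 * A := mul_le_mul_of_nonneg_right hmfacle hApos
    linarith
  nlinarith [h1, h2, h3]

theorem stmt5 (n : ℕ) (hn : 0 < n) :
    ConcaveOn ℝ Set.univ (fun x : ℝ => polygamma (2 * n - 2) (Real.exp x)) := by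
  set m := 2 * n - 2 with hm_def
  have hm : Even m := ⟨n - 1, by omega⟩
  have heq : (fun x : ℝ => polygamma m (Real.exp x)) = fun x => psi m (Real.exp x) :=
    funext fun x => iteratedDeriv_digamma m _ (Real.exp_pos x)
  rw [heq]
  set G := fun x : ℝ => psi m (Real.exp x) with hG_def
  have hG1 : ∀ x : ℝ, HasDerivAt G (Real.exp x * psi (m+1) (Real.exp x)) x := by
    intro x
    have := (hasDerivAt_psi m (Real.exp_pos x)).comp x (Real.hasDerivAt_exp x)
    simpa [mul_comm, Function.comp_def] using this
  have hderiv : deriv G = fun x => Real.exp x * psi (m+1) (Real.exp x) :=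
    funext fun x => (hG1 x).deriv
  have hG2 : ∀ x : ℝ, HasDerivAt (fun z => Real.exp z * psi (m+1) (Real.exp z))
      (Real.exp x * psi (m+1) (Real.exp x)
        + Real.exp x * (Real.exp x * psi (m+2) (Real.exp x))) x := by
    intro x
    have h1 := Real.hasDerivAt_exp x
    have h2 := (hasDerivAt_psi (m+1) (Real.exp_pos x)).comp x (Real.hasDerivAt_exp x)
    have := h1.mul h2
    convert this using 1 <;> try rfl
    simp [Function.comp]
    ring
  apply concaveOn_of_deriv2_nonpos convex_univ
  · exact (Differentiable.continuous fun x => (hG1 x).differentiableAt).continuousOn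
  · intro x _
    exact ((hG1 x).differentiableAt).differentiableWithinAt
  · intro x _
    rw [hderiv]
    exact ((hG2 x).differentiableAt).differentiableWithinAt
  · intro x _
    have hd2 : deriv (deriv G) x = Real.exp x * psi (m+1) (Real.exp x)
        + Real.exp x * (Real.exp x * psi (m+2) (Real.exp x)) := by
      rw [hderiv]
      exact (hG2 x).deriv
    have : deriv^[2] G x = deriv (deriv G) x := rfl
    rw [this, hd2]
    have hmain := main_ineq m hm (Real.exp_pos x)
    have hexp := Real.exp_pos x
    nlinarith [hmain, hexp, mul_le_mul_of_nonneg_left hmain hexp.le]
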